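/- Let 𝔉 be a union-closed family of subsets of X = {a₁,…,aₙ}, let S ⊆ 𝔉 be an antichain, and let ℱ = φ_w(𝔉) for w = a₁a₂…aₙ. Then (1/|𝔉[S]|)·Σ_{f ∈ 𝔉[S]} |f| ≥ n/2 + (1/(2|𝔉[S]|))·Σ_{a∈X} |π_w(a) ∩ S↑| − (1/2)·log₂( |S↑| / |𝔉[S]| ). The bound is attained when S = min(𝔉) and 𝔉 is upward-closed. -/

import Mathlib

open Finset

variable {α : Type*} [DecidableEq α]

/-- A family is union-closed if it is closed under pairwise unions. -/
def UnionClosed (F : Finset (Finset α)) : Prop := ∀ f ∈ F, ∀ g ∈ F, f ∪ g ∈ F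

/-- One rising step: φ_{S,a}(z) = z ∪ {a} if z ∪ {a} ∉ S, and z otherwise. -/
def riseStep (S : Finset (Finset α)) (a : α) (z : Finset α) : Finset α :=
  if insert a z ∈ S then z else insert a z

/-- Iterated rising function along a word (list of letters): at each step the
current family is replaced by its image and the next letter is risen. -/
def riseWord (S : Finset (Finset α)) : List α → Finset α → Finset α
  | [], z => z
  | a :: u, z => riseWord (S.image (riseStep S a)) u (riseStep S a z)

/-- The section of a family along (a prefix of) a word. -/
def riseSections (S : Finset (Finset α)) : List α → Finset (Finset α)
  | [] => S
  | a :: u => riseSections (S.image (riseStep S a)) u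

/-- The spurious elements σ_w(𝔉,a): the elements η ∈ ℱ = φ_w(𝔉) with
a ∈ η \ φ_w⁻¹(η), i.e. η = φ_w(f) with f ∈ 𝔉, a ∉ f, a ∈ η. -/
def spurious (F : Finset (Finset α)) (w : List α) (a : α) : Finset (Finset α) :=
  ((F.filter fun f => a ∉ f).image (riseWord F w)).filter fun η => a ∈ η

/-- The pure elements π_w(𝔉,a): the elements η ∈ φ_w(𝔉_a) with η \ {a} ∉ ℱ. -/
def pureF (F : Finset (Finset α)) (w : List α) (a : α) : Finset (Finset α) :=
  ((F.filter fun f => a ∈ f).image (riseWord F w)).filter fun η =>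
    η.erase a ∉ F.image (riseWord F w)

/-- The set of minimal elements of a family (under inclusion). -/
def minsF (F : Finset (Finset α)) : Finset (Finset α) :=
  F.filter fun h => ∀ g ∈ F, g ⊆ h → g = h

/-- The principal ideal 𝔉[S] = { f ∈ 𝔉 : ∃ z ∈ S, z ⊆ f }. -/
def idealF (F S : Finset (Finset α)) : Finset (Finset α) :=
  F.filter fun f => ∃ z ∈ S, z ⊆ f

/-- The intersection T ∩ S↑ of a family T with the up-closure of S. -/
def upFilter (S T : Finset (Finset α)) : Finset (Finset α) :=
  T.filter fun t => ∃ z ∈ S, z ⊆ t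

namespace Stmt16Aux

lemma riseStep_of_mem {S : Finset (Finset α)} {a : α} {z : Finset α}
    (h : insert a z ∈ S) : riseStep S a z = z := if_pos h

lemma riseStep_of_not_mem {S : Finset (Finset α)} {a : α} {z : Finset α}
    (h : insert a z ∉ S) : riseStep S a z = insert a z := if_neg h

lemma subset_riseStep (S : Finset (Finset α)) (a : α) (z : Finset α) :
    z ⊆ riseStep S a z := by
  unfold riseStep; split
  · exact Finset.Subset.refl z
  · exact Finset.subset_insert a z

lemma subset_riseWord : ∀ (u : List α) (S : Finset (Finset α)) (z : Finset α),
    z ⊆ riseWord S u z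
  | [], S, z => Finset.Subset.refl z
  | a :: u, S, z =>
    (subset_riseStep S a z).trans (subset_riseWord u _ (riseStep S a z))

/-- if `s ∈ S` then `insert a s` lands in the one-step image. -/
lemma insert_mem_image {S : Finset (Finset α)} {a : α} {s : Finset α} (hs : s ∈ S) :
    insert a s ∈ S.image (riseStep S a) := by
  by_cases h : insert a s ∈ S
  · have : riseStep S a (insert a s) = insert a s := riseStep_of_mem (by rwa [Finset.insert_idem])
    exact this ▸ Finset.mem_image_of_mem _ h
  · exact (riseStep_of_not_mem h) ▸ Finset.mem_image_of_mem _ hs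

lemma self_mem_image {S : Finset (Finset α)} {a : α} {s : Finset α} (hs : s ∈ S)
    (h : insert a s ∈ S) : s ∈ S.image (riseStep S a) :=
  (riseStep_of_mem h) ▸ Finset.mem_image_of_mem _ hs

lemma unionClosed_image {S : Finset (Finset α)} (hS : UnionClosed S) (a : α) :
    UnionClosed (S.image (riseStep S a)) := by
  intro f' hf' g' hg'
  obtain ⟨f, hf, rfl⟩ := Finset.mem_image.1 hf'
  obtain ⟨g, hg, rfl⟩ := Finset.mem_image.1 hg'
  have hfg : f ∪ g ∈ S := hS f hf g hg
  by_cases h1 : insert a f ∈ S <;> by_cases h2 : insert a g ∈ S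
  · rw [riseStep_of_mem h1, riseStep_of_mem h2]
    exact self_mem_image hfg (by rw [← Finset.insert_union]; exact hS _ h1 g hg)
  · rw [riseStep_of_mem h1, riseStep_of_not_mem h2, Finset.union_insert]
    exact insert_mem_image hfg
  · rw [riseStep_of_not_mem h1, riseStep_of_mem h2, Finset.insert_union]
    exact insert_mem_image hfg
  · rw [riseStep_of_not_mem h1, riseStep_of_not_mem h2, Finset.insert_union,
      Finset.union_insert, Finset.insert_idem]
    exact insert_mem_image hfg

/-- After processing `a`, the family is `a`-sealed. -/
lemma sealed_image_self {S : Finset (Finset α)} {a : α} :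
    ∀ z ∈ S.image (riseStep S a), a ∉ z → insert a z ∈ S.image (riseStep S a) := by
  intro z' hz' ha
  obtain ⟨z, hz, rfl⟩ := Finset.mem_image.1 hz'
  by_cases h : insert a z ∈ S
  · rw [riseStep_of_mem h] at ha ⊢
    exact insert_mem_image hz
  · rw [riseStep_of_not_mem h] at ha
    exact absurd (Finset.mem_insert_self a z) ha

/-- sealedness for `a` is preserved by processing another letter `b ≠ a`. -/
lemma sealed_image_preserved {S : Finset (Finset α)} {a b : α} (hab : a ≠ b)
    (h : ∀ z ∈ S, a ∉ z → insert a z ∈ S) :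
    ∀ z ∈ S.image (riseStep S b), a ∉ z → insert a z ∈ S.image (riseStep S b) := by
  intro z' hz' ha
  obtain ⟨z, hz, rfl⟩ := Finset.mem_image.1 hz'
  have haz : a ∉ z := fun h' => ha ((subset_riseStep S b z) h')
  have hins : insert a z ∈ S := h z hz haz
  by_cases hbz : insert b z ∈ S
  · rw [riseStep_of_mem hbz]
    have : insert b (insert a z) ∈ S := by
      rw [Finset.insert_comm]
      exact h _ hbz (by simp [haz, hab])
    exact self_mem_image hins this
  · rw [riseStep_of_not_mem hbz]
    by_cases h2 : insert b (insert a z) ∈ S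
    · rw [Finset.insert_comm]
      exact self_mem_image h2 (by rwa [Finset.insert_idem])
    · rw [Finset.insert_comm]
      exact (riseStep_of_not_mem h2) ▸ Finset.mem_image_of_mem _ hins

lemma sealed_riseSections_of :
    ∀ (u : List α) (S : Finset (Finset α)) (a : α), a ∉ u →
    (∀ z ∈ S, a ∉ z → insert a z ∈ S) →
    ∀ z ∈ riseSections S u, a ∉ z → insert a z ∈ riseSections S u
  | [], S, a, _, h => h
  | b :: u, S, a, hau, h => by
    have hab : a ≠ b := fun h' => hau (h' ▸ List.mem_cons_self)
    have hau' : a ∉ u := fun h' => hau (List.mem_cons_of_mem _ h')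
    exact sealed_riseSections_of u _ a hau' (sealed_image_preserved hab h)

lemma sealed_riseSections :
    ∀ (u : List α) (S : Finset (Finset α)) (a : α), a ∈ u → u.Nodup →
    ∀ z ∈ riseSections S u, a ∉ z → insert a z ∈ riseSections S u
  | [], _, a, ha, _ => absurd ha List.not_mem_nil
  | b :: u, S, a, ha, hnd => by
    by_cases hab : a = b
    · subst hab
      have hau : a ∉ u := (List.nodup_cons.1 hnd).1
      exact sealed_riseSections_of u _ a hau sealed_image_self
    · have ha' : a ∈ u := (List.mem_cons.1 ha).resolve_left hab
      exact sealed_riseSections u _ a ha' (List.nodup_cons.1 hnd).2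

lemma image_riseWord_eq_riseSections :
    ∀ (u : List α) (S : Finset (Finset α)), S.image (riseWord S u) = riseSections S u
  | [], S => by
    have : riseWord S [] = fun z => z := rfl
    rw [this]; exact Finset.image_id'
  | a :: u, S => by
    have : riseWord S (a :: u) = fun z => riseWord (S.image (riseStep S a)) u (riseStep S a z) :=
      rfl
    rw [this]
    have himg : S.image (fun z => riseWord (S.image (riseStep S a)) u (riseStep S a z)) =
        (S.image (riseStep S a)).image (riseWord (S.image (riseStep S a)) u) := by
      rw [Finset.image_image]; rfl
    rw [himg, image_riseWord_eq_riseSections u _]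
    rfl

/-- Core disjointness lemma (Reimer): mutual containment in risen images forces equality. -/
lemma rise_core : ∀ (u : List α) (T : Finset (Finset α)), UnionClosed T →
    ∀ f ∈ T, ∀ g ∈ T, g ⊆ riseWord T u f → f ⊆ riseWord T u g → f = g
  | [], T, _, f, _, g, _, h1, h2 => Finset.Subset.antisymm h2 h1
  | a :: u, T, hT, f, hf, g, hg, h1, h2 => by
    set T' := T.image (riseStep T a) with hT'def
    have hT' : UnionClosed T' := unionClosed_image hT a
    have hw : ∀ z : Finset α, riseWord T (a :: u) z = riseWord T' u (riseStep T a z) :=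
      fun _ => rfl
    rw [hw f] at h1; rw [hw g] at h2
    -- the "mixed" case is impossible
    have key : ∀ p q : Finset α, p ∈ T → q ∈ T → insert a p ∈ T → insert a q ∉ T →
        q ⊆ riseWord T' u p → p ⊆ riseWord T' u (insert a q) → False := by
      intro p q hp hq hpi hqi k1 k2
      have hp' : p ∈ T' := self_mem_image hp hpi
      have hq' : insert a q ∈ T' := (riseStep_of_not_mem hqi) ▸ Finset.mem_image_of_mem _ hq
      by_cases hap : a ∈ p
      · have : p = insert a q := rise_core u T' hT' p hp' (insert a q) hq'
          (Finset.insert_subset ((subset_riseWord u T' p) hap) k1) k2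
        exact hqi (this ▸ hp)
      · have hh : p ∪ q ∈ T := hT p hp q hq
        have hhi : insert a (p ∪ q) ∈ T := by
          rw [← Finset.insert_union]; exact hT _ hpi q hq
        have hh' : p ∪ q ∈ T' := self_mem_image hh hhi
        have e1 : p = p ∪ q := rise_core u T' hT' p hp' (p ∪ q) hh'
          (Finset.union_subset (subset_riseWord u T' p) k1)
          (Finset.subset_union_left.trans (subset_riseWord u T' (p ∪ q)))
        have hqp : q ⊆ p := e1 ▸ Finset.subset_union_right
        have hpmem : insert a p ∈ T' := self_mem_image hpi (by rwa [Finset.insert_idem])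
        have e2 : insert a p = insert a q := rise_core u T' hT' (insert a p) hpmem
          (insert a q) hq'
          (Finset.insert_subset ((subset_riseWord u T' (insert a p)) (Finset.mem_insert_self a p))
            ((hqp.trans (Finset.subset_insert a p)).trans (subset_riseWord u T' (insert a p))))
          (Finset.insert_subset
            ((subset_riseWord u T' (insert a q)) (Finset.mem_insert_self a q)) k2)
        exact hqi (e2 ▸ hpi)
    by_cases hfi : insert a f ∈ T <;> by_cases hgi : insert a g ∈ T
    · rw [riseStep_of_mem hfi] at h1
      rw [riseStep_of_mem hgi] at h2
      exact rise_core u T' hT' f (self_mem_image hf hfi) g (self_mem_image hg hgi) h1 h2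
    · rw [riseStep_of_mem hfi] at h1
      rw [riseStep_of_not_mem hgi] at h2
      exact (key f g hf hg hfi hgi h1 h2).elim
    · rw [riseStep_of_not_mem hfi] at h1
      rw [riseStep_of_mem hgi] at h2
      exact ((key g f hg hf hgi hfi h2 h1).elim : f = g)
    · have haf : a ∉ f := fun h => hfi (by rwa [Finset.insert_eq_self.2 h])
      have hag : a ∉ g := fun h => hgi (by rwa [Finset.insert_eq_self.2 h])
      rw [riseStep_of_not_mem hfi] at h1
      rw [riseStep_of_not_mem hgi] at h2
      have hf' : insert a f ∈ T' := (riseStep_of_not_mem hfi) ▸ Finset.mem_image_of_mem _ hf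
      have hg' : insert a g ∈ T' := (riseStep_of_not_mem hgi) ▸ Finset.mem_image_of_mem _ hg
      have e : insert a f = insert a g := rise_core u T' hT' (insert a f) hf' (insert a g) hg'
        (Finset.insert_subset
          ((subset_riseWord u T' (insert a f)) (Finset.mem_insert_self a f)) h1)
        (Finset.insert_subset
          ((subset_riseWord u T' (insert a g)) (Finset.mem_insert_self a g)) h2)
      calc f = (insert a f).erase a := (Finset.erase_insert haf).symm
        _ = (insert a g).erase a := by rw [e]
        _ = g := Finset.erase_insert hag

end Stmt16Aux

namespace Stmt16Aux

/-- double counting: sum over coordinates of filtered cards equals sum of cards. -/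
lemma sum_card_filter_mem {β : Type*} [Fintype α] (s : Finset β) (h : β → Finset α) :
    ∑ a : α, (s.filter fun x => a ∈ h x).card = ∑ x ∈ s, (h x).card := by
  have e1 : ∀ a : α, (s.filter fun x => a ∈ h x).card
      = ∑ x ∈ s, if a ∈ h x then 1 else 0 := fun a => Finset.card_filter _ _
  simp only [e1]
  rw [Finset.sum_comm]
  refine Finset.sum_congr rfl fun x _ => ?_
  rw [← Finset.card_filter, Finset.filter_univ_mem]

/-- the pairing identity for a coordinate, for a relatively up-closed family. -/
lemma pairing_coord (H : Finset (Finset α)) (a : α)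
    (hup : ∀ η ∈ H, a ∉ η → insert a η ∈ H) :
    2 * (H.filter fun η => a ∈ η).card
      = H.card + (H.filter fun η => a ∈ η ∧ η.erase a ∉ H).card := by
  classical
  set A := H.filter (fun η => a ∈ η) with hA
  set B := H.filter (fun η => ¬ a ∈ η) with hB
  have hAB : A.card + B.card = H.card := Finset.card_filter_add_card_filter_not _
  have himg : B.image (insert a) = A.filter fun η => η.erase a ∈ H := by
    ext η
    constructor
    · intro hm
      obtain ⟨ξ, hξ, rfl⟩ := Finset.mem_image.1 hm
      obtain ⟨hξH, hξa⟩ := Finset.mem_filter.1 hξ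
      refine Finset.mem_filter.2 ⟨Finset.mem_filter.2 ⟨hup ξ hξH hξa, Finset.mem_insert_self _ _⟩, ?_⟩
      rw [Finset.erase_insert hξa]; exact hξH
    · intro hm
      obtain ⟨hmA, hmE⟩ := Finset.mem_filter.1 hm
      obtain ⟨hmH, hma⟩ := Finset.mem_filter.1 hmA
      refine Finset.mem_image.2 ⟨η.erase a, Finset.mem_filter.2 ⟨hmE, Finset.notMem_erase a η⟩, ?_⟩
      exact Finset.insert_erase hma
  have hinj : Set.InjOn (insert a) (B : Set (Finset α)) := by
    intro x hx y hy hxy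
    have hax : a ∉ x := (Finset.mem_filter.1 (Finset.mem_coe.1 hx)).2
    have hay : a ∉ y := (Finset.mem_filter.1 (Finset.mem_coe.1 hy)).2
    calc x = (insert a x).erase a := (Finset.erase_insert hax).symm
      _ = (insert a y).erase a := by rw [hxy]
      _ = y := Finset.erase_insert hay
  have hBcard : B.card = (A.filter fun η => η.erase a ∈ H).card := by
    rw [← himg, Finset.card_image_of_injOn hinj]
  have hsplit : (A.filter fun η => η.erase a ∈ H).card
      + (A.filter fun η => ¬ η.erase a ∈ H).card = A.card :=
    Finset.card_filter_add_card_filter_not _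
  have hPP : H.filter (fun η => a ∈ η ∧ η.erase a ∉ H)
      = A.filter fun η => ¬ η.erase a ∈ H := by
    rw [hA, Finset.filter_filter]
  rw [hPP]
  omega

/-- the full pairing identity. -/
lemma pairing [Fintype α] (H : Finset (Finset α))
    (hup : ∀ η ∈ H, ∀ x : α, x ∉ η → insert x η ∈ H) :
    2 * ∑ η ∈ H, η.card
      = Fintype.card α * H.card
        + ∑ a : α, (H.filter fun η => a ∈ η ∧ η.erase a ∉ H).card := by
  have e := sum_card_filter_mem (s := H) (h := fun (η : Finset α) => η)
  calc 2 * ∑ η ∈ H, η.card = ∑ a : α, 2 * (H.filter fun η => a ∈ η).card := by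
        rw [← e, Finset.mul_sum]
    _ = ∑ a : α, (H.card + (H.filter fun η => a ∈ η ∧ η.erase a ∉ H).card) :=
        Finset.sum_congr rfl fun a _ => pairing_coord H a (fun η hη ha => hup η hη a ha)
    _ = Fintype.card α * H.card
        + ∑ a : α, (H.filter fun η => a ∈ η ∧ η.erase a ∉ H).card := by
        rw [Finset.sum_add_distrib, Finset.sum_const, Finset.card_univ, smul_eq_mul]

/-- every member of a finite family contains a minimal member. -/
lemma exists_mins_subset (F : Finset (Finset α)) {f : Finset α} (hf : f ∈ F) :
    ∃ z ∈ F, (∀ g ∈ F, g ⊆ z → g = z) ∧ z ⊆ f := by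
  classical
  have hne : (F.filter fun g => g ⊆ f).Nonempty := ⟨f, Finset.mem_filter.2 ⟨hf, Finset.Subset.refl f⟩⟩
  obtain ⟨z, hz, hmin⟩ := Finset.exists_min_image (F.filter fun g => g ⊆ f) Finset.card hne
  obtain ⟨hzF, hzf⟩ := Finset.mem_filter.1 hz
  refine ⟨z, hzF, fun g hg hgz => ?_, hzf⟩
  have hgf : g ∈ F.filter fun g => g ⊆ f := Finset.mem_filter.2 ⟨hg, hgz.trans hzf⟩
  exact Finset.eq_of_subset_of_card_le hgz (hmin g hgf)

/-- Jensen / AM-GM step. -/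
lemma sum_le_card_mul_logb {β : Type*} (G : Finset β) (d : β → ℕ) (U : ℕ)
    (hne : G.Nonempty) (hsum : ∑ f ∈ G, 2 ^ d f ≤ U) :
    (∑ f ∈ G, (d f : ℝ)) ≤ (G.card : ℝ) * Real.logb 2 ((U : ℝ) / (G.card : ℝ)) := by
  classical
  have hN : (0 : ℝ) < (G.card : ℝ) := by
    exact_mod_cast Finset.card_pos.2 hne
  set N : ℝ := (G.card : ℝ) with hNdef
  have hgm := Real.geom_mean_le_arith_mean_weighted G (fun _ => 1 / N)
    (fun f => (2 : ℝ) ^ (d f : ℝ))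
    (fun i _ => by positivity)
    (by rw [Finset.sum_const, nsmul_eq_mul]; field_simp; rfl)
    (fun i _ => by positivity)
  have hlhs : ∏ i ∈ G, ((2 : ℝ) ^ (d i : ℝ)) ^ (1 / N : ℝ)
      = (2 : ℝ) ^ ((∑ i ∈ G, (d i : ℝ)) / N) := by
    have e : ∀ i ∈ G, ((2 : ℝ) ^ (d i : ℝ)) ^ (1 / N : ℝ)
        = (2 : ℝ) ^ ((d i : ℝ) * (1 / N)) := fun i _ => by
      rw [← Real.rpow_mul (by norm_num : (0:ℝ) ≤ 2)]
    rw [Finset.prod_congr rfl e, ← Real.rpow_sum_of_pos (by norm_num : (0:ℝ) < 2)]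
    congr 1
    rw [← Finset.sum_mul, mul_one_div]
  have hboundU : ∑ i ∈ G, (2 : ℝ) ^ (d i : ℝ) ≤ (U : ℝ) := by
    have e : ∀ i ∈ G, (2 : ℝ) ^ (d i : ℝ) = ((2 ^ d i : ℕ) : ℝ) := fun i _ => by
      rw [Real.rpow_natCast]; push_cast; ring
    rw [Finset.sum_congr rfl e, ← Nat.cast_sum]
    exact_mod_cast hsum
  have hrhs : ∑ i ∈ G, (1 / N) * (2 : ℝ) ^ (d i : ℝ) ≤ (U : ℝ) / N := by
    rw [← Finset.mul_sum, one_div, div_eq_inv_mul]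
    exact mul_le_mul_of_nonneg_left hboundU (by positivity)
  have key : (2:ℝ) ^ ((∑ i ∈ G, (d i : ℝ)) / N) ≤ (U:ℝ)/N := by
    rw [← hlhs]; exact hgm.trans hrhs
  have hx : (0:ℝ) < (2:ℝ) ^ ((∑ i ∈ G, (d i:ℝ))/N) := Real.rpow_pos_of_pos (by norm_num) _
  have hfin := Real.logb_le_logb_of_le (by norm_num : (1:ℝ) < 2) hx key
  rw [Real.logb_rpow (by norm_num : (0:ℝ) < 2) (by norm_num : (2:ℝ) ≠ 1)] at hfin
  rw [div_le_iff₀ hN] at hfin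
  linarith


end Stmt16Aux

namespace Stmt16Aux

lemma image_riseStep_of_upclosed {F : Finset (Finset α)}
    (h : ∀ f ∈ F, ∀ x : α, insert x f ∈ F) (a : α) : F.image (riseStep F a) = F := by
  have e : ∀ f ∈ F, riseStep F a f = f := fun f hf => riseStep_of_mem (h f hf a)
  calc F.image (riseStep F a) = F.image id := Finset.image_congr (fun f hf => e f hf)
    _ = F := Finset.image_id

lemma riseWord_eq_self {F : Finset (Finset α)} (h : ∀ f ∈ F, ∀ x : α, insert x f ∈ F) :
    ∀ (u : List α), ∀ f ∈ F, riseWord F u f = f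
  | [], f, _ => rfl
  | a :: u, f, hf => by
    have hw : riseWord F (a :: u) f
        = riseWord (F.image (riseStep F a)) u (riseStep F a f) := rfl
    rw [hw, riseStep_of_mem (h f hf a), image_riseStep_of_upclosed h a]
    exact riseWord_eq_self h u f hf

end Stmt16Aux

set_option maxHeartbeats 1000000 in
open Stmt16Aux in
/-- Theorem 5.11: for an antichain S ⊆ 𝔉,
(1/|𝔉[S]|)Σ_{f∈𝔉[S]}|f| ≥ n/2 + (1/(2|𝔉[S]|))Σ_{a∈X}|π_w(a) ∩ S↑|
  − (1/2)log₂(|S↑|/|𝔉[S]|),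
and the bound is attained when S = min(𝔉) and 𝔉 is upward-closed. -/
theorem stmt_16 {α : Type*} [DecidableEq α] [Fintype α]
    (F : Finset (Finset α)) (hF : UnionClosed F)
    (hcov : ∀ x : α, ∃ f ∈ F, x ∈ f)
    (w : List α) (hnd : w.Nodup) (hall : ∀ x : α, x ∈ w)
    (S : Finset (Finset α)) (hS : S ⊆ F) (hSne : S.Nonempty)
    (hanti : ∀ f ∈ S, ∀ g ∈ S, f ⊆ g → f = g) :
    (1 / ((idealF F S).card : ℝ)) * ∑ f ∈ idealF F S, (f.card : ℝ) ≥
      (Fintype.card α : ℝ) / 2 +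
      (1 / (2 * ((idealF F S).card : ℝ))) * ∑ a : α, ((upFilter S (pureF F w a)).card : ℝ) -
      (1 / 2) * Real.logb 2
        (((upFilter S (Finset.univ : Finset (Finset α))).card : ℝ) / ((idealF F S).card : ℝ)) ∧
    ((S = minsF F ∧ ∀ f ∈ F, ∀ g : Finset α, f ⊆ g → g ∈ F) →
      (1 / ((idealF F S).card : ℝ)) * ∑ f ∈ idealF F S, (f.card : ℝ) =
        (Fintype.card α : ℝ) / 2 +
        (1 / (2 * ((idealF F S).card : ℝ))) * ∑ a : α, ((upFilter S (pureF F w a)).card : ℝ) -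
        (1 / 2) * Real.logb 2
          (((upFilter S (Finset.univ : Finset (Finset α))).card : ℝ) / ((idealF F S).card : ℝ))) := by
  classical
  have hΦsub : ∀ z : Finset α, z ⊆ riseWord F w z := fun z => subset_riseWord w F z
  have core : ∀ f ∈ F, ∀ g ∈ F, g ⊆ riseWord F w f → f ⊆ riseWord F w g → f = g :=
    rise_core w F hF
  have hGF : idealF F S ⊆ F := Finset.filter_subset _ _
  have hGmem : ∀ f, f ∈ idealF F S ↔ (f ∈ F ∧ ∃ z ∈ S, z ⊆ f) := by
    intro f; simp [idealF, Finset.mem_filter]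
  have hGne : (idealF F S).Nonempty := by
    obtain ⟨z, hz⟩ := hSne
    exact ⟨z, (hGmem z).2 ⟨hS hz, ⟨z, hz, Finset.Subset.refl z⟩⟩⟩
  have hN0 : (0:ℝ) < ((idealF F S).card : ℝ) := by exact_mod_cast Finset.card_pos.2 hGne
  have hNne : ((idealF F S).card : ℝ) ≠ 0 := ne_of_gt hN0
  -- the risen family is upward closed
  have hFFup : ∀ η ∈ F.image (riseWord F w), ∀ x : α, x ∉ η →
      insert x η ∈ F.image (riseWord F w) := by
    intro η hη x hx
    rw [image_riseWord_eq_riseSections] at hη ⊢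
    exact sealed_riseSections w F x (hall x) hnd η hη hx
  -- H = upFilter S (image)
  have hHF : (idealF F S).image (riseWord F w) = upFilter S (F.image (riseWord F w)) := by
    ext η
    simp only [upFilter, Finset.mem_filter]
    constructor
    · intro hm
      obtain ⟨f, hf, rfl⟩ := Finset.mem_image.1 hm
      obtain ⟨hfF, z, hzS, hzf⟩ := (hGmem f).1 hf
      exact ⟨Finset.mem_image_of_mem _ hfF, z, hzS, hzf.trans (hΦsub f)⟩
    · rintro ⟨hηFF, z, hzS, hzη⟩
      obtain ⟨f, hfF, rfl⟩ := Finset.mem_image.1 hηFF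
      have hzF : z ∈ F := hS hzS
      have he : f = f ∪ z := core f hfF (f ∪ z) (hF f hfF z hzF)
        (Finset.union_subset (hΦsub f) hzη)
        (Finset.subset_union_left.trans (hΦsub (f ∪ z)))
      have hzf : z ⊆ f := by
        intro x hx
        rw [he]; exact Finset.subset_union_right hx
      exact Finset.mem_image_of_mem _ ((hGmem f).2 ⟨hfF, z, hzS, hzf⟩)
  have hHup : ∀ η ∈ (idealF F S).image (riseWord F w), ∀ x : α, x ∉ η →
      insert x η ∈ (idealF F S).image (riseWord F w) := by
    intro η hη x hx
    rw [hHF] at hη ⊢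
    simp only [upFilter, Finset.mem_filter] at hη ⊢
    obtain ⟨hηFF, z, hzS, hzη⟩ := hη
    exact ⟨hFFup η hηFF x hx, z, hzS, hzη.trans (Finset.subset_insert x η)⟩
  have hinjF : ∀ f ∈ F, ∀ g ∈ F, riseWord F w f = riseWord F w g → f = g := by
    intro f hf g hg h
    exact core f hf g hg (by rw [h]; exact hΦsub g) (by rw [← h]; exact hΦsub f)
  have hinj : ∀ f ∈ idealF F S, ∀ g ∈ idealF F S,
      riseWord F w f = riseWord F w g → f = g :=
    fun f hf g hg h => hinjF f (hGF hf) g (hGF hg) h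
  have hHcard : ((idealF F S).image (riseWord F w)).card = (idealF F S).card :=
    Finset.card_image_of_injOn (fun f hf g hg h => hinj f hf g hg h)
  -- pure-set inequality per coordinate
  have hpure : ∀ a : α,
      (upFilter S (pureF F w a)).card
        + ((idealF F S).filter (fun f => a ∈ riseWord F w f \ f)).card
      ≤ (((idealF F S).image (riseWord F w)).filter
          (fun η => a ∈ η ∧ η.erase a ∉ (idealF F S).image (riseWord F w))).card := by
    intro a
    have hA1 : upFilter S (pureF F w a) ⊆
        ((idealF F S).image (riseWord F w)).filter
          (fun η => a ∈ η ∧ η.erase a ∉ (idealF F S).image (riseWord F w)) := by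
      intro η hη
      simp only [upFilter, Finset.mem_filter] at hη
      obtain ⟨hηp, z, hzS, hzη⟩ := hη
      simp only [pureF, Finset.mem_filter] at hηp
      obtain ⟨hηimg, hηerase⟩ := hηp
      obtain ⟨g, hgfil, rfl⟩ := Finset.mem_image.1 hηimg
      obtain ⟨hgF, hag⟩ := Finset.mem_filter.1 hgfil
      have hηH : riseWord F w g ∈ (idealF F S).image (riseWord F w) := by
        rw [hHF]
        simp only [upFilter, Finset.mem_filter]
        exact ⟨Finset.mem_image_of_mem _ hgF, z, hzS, hzη⟩
      refine Finset.mem_filter.2 ⟨hηH, (hΦsub g) hag, fun hc => hηerase ?_⟩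
      rw [hHF] at hc
      exact (Finset.mem_filter.1 hc).1
    have hB1 : ((idealF F S).filter (fun f => a ∈ riseWord F w f \ f)).image (riseWord F w) ⊆
        ((idealF F S).image (riseWord F w)).filter
          (fun η => a ∈ η ∧ η.erase a ∉ (idealF F S).image (riseWord F w)) := by
      intro η hη
      obtain ⟨f, hfB, rfl⟩ := Finset.mem_image.1 hη
      obtain ⟨hfG, hms⟩ := Finset.mem_filter.1 hfB
      obtain ⟨haΦ, haf⟩ := Finset.mem_sdiff.1 hms
      refine Finset.mem_filter.2 ⟨Finset.mem_image_of_mem _ hfG, haΦ, fun hc => ?_⟩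
      rw [hHF] at hc
      have hcFF := (Finset.mem_filter.1 hc).1
      obtain ⟨g, hgF, hgeq⟩ := Finset.mem_image.1 hcFF
      have h1 : g ⊆ riseWord F w f := by
        intro x hx
        exact Finset.erase_subset a (riseWord F w f) (hgeq ▸ (hΦsub g) hx)
      have h2 : f ⊆ riseWord F w g := by
        rw [hgeq]
        exact Finset.subset_erase.2 ⟨hΦsub f, haf⟩
      have hfg : f = g := core f (hGF hfG) g hgF h1 h2
      rw [← hfg] at hgeq
      exact (Finset.notMem_erase a (riseWord F w f)) (hgeq ▸ haΦ)
    have hdisj : Disjoint (upFilter S (pureF F w a))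
        (((idealF F S).filter (fun f => a ∈ riseWord F w f \ f)).image (riseWord F w)) := by
      rw [Finset.disjoint_left]
      intro η hηA hηB
      obtain ⟨f, hfB, rfl⟩ := Finset.mem_image.1 hηB
      obtain ⟨hfG, hms⟩ := Finset.mem_filter.1 hfB
      obtain ⟨haΦ, haf⟩ := Finset.mem_sdiff.1 hms
      simp only [upFilter, pureF, Finset.mem_filter] at hηA
      obtain ⟨⟨hηimg, _⟩, _⟩ := hηA
      obtain ⟨g, hgfil, hgeq⟩ := Finset.mem_image.1 hηimg
      obtain ⟨hgF, hag⟩ := Finset.mem_filter.1 hgfil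
      have : g = f := hinjF g hgF f (hGF hfG) hgeq
      exact haf (this ▸ hag)
    have hcount : (upFilter S (pureF F w a)).card
        + ((idealF F S).filter (fun f => a ∈ riseWord F w f \ f)).card
        = ((upFilter S (pureF F w a)) ∪
            ((idealF F S).filter (fun f => a ∈ riseWord F w f \ f)).image (riseWord F w)).card := by
      rw [Finset.card_union_of_disjoint hdisj]
      congr 1
      exact (Finset.card_image_of_injOn (fun f hf g hg h =>
        hinj f (Finset.filter_subset _ _ hf) g (Finset.filter_subset _ _ hg) h)).symm
    rw [hcount]
    exact Finset.card_le_card (Finset.union_subset hA1 hB1)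
  -- sum over coordinates of the B-part
  have hBsum : ∑ a : α, ((idealF F S).filter (fun f => a ∈ riseWord F w f \ f)).card
      = ∑ f ∈ idealF F S, (riseWord F w f \ f).card :=
    sum_card_filter_mem (idealF F S) (fun f => riseWord F w f \ f)
  -- the pairing identity
  have hpair := pairing ((idealF F S).image (riseWord F w)) hHup
  have hsumH : ∑ η ∈ (idealF F S).image (riseWord F w), η.card
      = ∑ f ∈ idealF F S, (riseWord F w f).card :=
    Finset.sum_image (fun f hf g hg h => hinj f hf g hg h)
  have hsplitsum : ∑ f ∈ idealF F S, (riseWord F w f).card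
      = ∑ f ∈ idealF F S, f.card + ∑ f ∈ idealF F S, (riseWord F w f \ f).card := by
    rw [← Finset.sum_add_distrib]
    refine Finset.sum_congr rfl fun f _ => ?_
    rw [add_comm, Finset.card_sdiff_add_card_eq_card (hΦsub f)]
  -- cube counting
  have hcube : ∑ f ∈ idealF F S, 2 ^ (riseWord F w f \ f).card
      ≤ (upFilter S (Finset.univ : Finset (Finset α))).card := by
    have hcsub : ∀ f ∈ idealF F S, Finset.Icc f (riseWord F w f)
        ⊆ upFilter S (Finset.univ : Finset (Finset α)) := by
      intro f hf t ht
      obtain ⟨h1, h2⟩ := Finset.mem_Icc.1 ht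
      obtain ⟨hfF, z, hzS, hzf⟩ := (hGmem f).1 hf
      simp only [upFilter, Finset.mem_filter]
      exact ⟨Finset.mem_univ t, z, hzS, hzf.trans h1⟩
    have hdisj : ∀ f ∈ idealF F S, ∀ g ∈ idealF F S, f ≠ g →
        Disjoint (Finset.Icc f (riseWord F w f)) (Finset.Icc g (riseWord F w g)) := by
      intro f hf g hg hne
      rw [Finset.disjoint_left]
      intro t htf htg
      obtain ⟨h1, h2⟩ := Finset.mem_Icc.1 htf
      obtain ⟨h3, h4⟩ := Finset.mem_Icc.1 htg
      exact hne (core f (hGF hf) g (hGF hg) (h3.trans h2) (h1.trans h4))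
    calc ∑ f ∈ idealF F S, 2 ^ (riseWord F w f \ f).card
        = ∑ f ∈ idealF F S, (Finset.Icc f (riseWord F w f)).card := by
          refine Finset.sum_congr rfl fun f _ => ?_
          rw [Finset.card_Icc_finset (hΦsub f), Finset.card_sdiff_of_subset (hΦsub f)]
      _ = ((idealF F S).biUnion fun f => Finset.Icc f (riseWord F w f)).card :=
          (Finset.card_biUnion hdisj).symm
      _ ≤ (upFilter S (Finset.univ : Finset (Finset α))).card :=
          Finset.card_le_card (Finset.biUnion_subset.2 hcsub)
  have hjensen : (∑ f ∈ idealF F S, ((riseWord F w f \ f).card : ℝ))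
      ≤ ((idealF F S).card : ℝ) * Real.logb 2
          (((upFilter S (Finset.univ : Finset (Finset α))).card : ℝ) / ((idealF F S).card : ℝ)) :=
    sum_le_card_mul_logb (idealF F S) _ _ hGne hcube
  -- real versions
  have R1 : 2 * ((∑ f ∈ idealF F S, (f.card : ℝ)) + ∑ f ∈ idealF F S, ((riseWord F w f \ f).card : ℝ))
      = (Fintype.card α : ℝ) * ((idealF F S).card : ℝ)
        + ∑ a : α, ((((idealF F S).image (riseWord F w)).filter
            (fun η => a ∈ η ∧ η.erase a ∉ (idealF F S).image (riseWord F w))).card : ℝ) := by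
    rw [hsumH, hsplitsum, hHcard] at hpair
    exact_mod_cast hpair
  have R2 : (∑ a : α, ((upFilter S (pureF F w a)).card : ℝ))
      + ∑ f ∈ idealF F S, ((riseWord F w f \ f).card : ℝ)
      ≤ ∑ a : α, ((((idealF F S).image (riseWord F w)).filter
          (fun η => a ∈ η ∧ η.erase a ∉ (idealF F S).image (riseWord F w))).card : ℝ) := by
    have h1 : ∑ a : α, ((upFilter S (pureF F w a)).card
        + ((idealF F S).filter (fun f => a ∈ riseWord F w f \ f)).card)
        ≤ ∑ a : α, (((idealF F S).image (riseWord F w)).filter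
            (fun η => a ∈ η ∧ η.erase a ∉ (idealF F S).image (riseWord F w))).card :=
      Finset.sum_le_sum fun a _ => hpure a
    rw [Finset.sum_add_distrib, hBsum] at h1
    exact_mod_cast h1
  constructor
  · -- the inequality
    rw [ge_iff_le, ← sub_nonneg]
    have expand : ∀ sf p l n' N : ℝ, N ≠ 0 →
        1/N * sf - (n'/2 + 1/(2*N) * p - 1/2 * l) = (2*sf - (n'*N + p - N*l))/(2*N) := by
      intro sf p l n' N hN
      field_simp
    rw [expand _ _ _ _ _ hNne]
    apply div_nonneg _ (by positivity)
    linarith [R1, R2, hjensen]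
  · -- the equality case
    rintro ⟨hSmin, hFup⟩
    have hupc : ∀ f ∈ F, ∀ x : α, insert x f ∈ F :=
      fun f hf x => hFup f hf _ (Finset.subset_insert x f)
    have hid : ∀ f ∈ F, riseWord F w f = f := fun f hf => riseWord_eq_self hupc w f hf
    have hmins : ∀ f ∈ F, ∃ z ∈ S, z ⊆ f := by
      intro f hf
      obtain ⟨z, hzF, hzmin, hzf⟩ := exists_mins_subset F hf
      refine ⟨z, ?_, hzf⟩
      rw [hSmin]
      simp only [minsF, Finset.mem_filter]
      exact ⟨hzF, hzmin⟩
    have hGF2 : idealF F S = F := by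
      ext f
      rw [hGmem f]
      exact ⟨fun h => h.1, fun h => ⟨h, hmins f h⟩⟩
    have himgF : F.image (riseWord F w) = F := by
      calc F.image (riseWord F w) = F.image id := Finset.image_congr (fun f hf => hid f hf)
        _ = F := Finset.image_id
    have hUF : upFilter S (Finset.univ : Finset (Finset α)) = F := by
      ext t
      simp only [upFilter, Finset.mem_filter, Finset.mem_univ, true_and]
      constructor
      · rintro ⟨z, hzS, hzt⟩
        exact hFup z (hS hzS) t hzt
      · intro ht
        exact hmins t ht
    have hApure : ∀ a : α, upFilter S (pureF F w a)
        = F.filter (fun η => a ∈ η ∧ η.erase a ∉ F) := by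
      intro a
      have himgfil : (F.filter fun f => a ∈ f).image (riseWord F w)
          = F.filter fun f => a ∈ f := by
        calc (F.filter fun f => a ∈ f).image (riseWord F w)
            = (F.filter fun f => a ∈ f).image id :=
              Finset.image_congr (fun f hf => hid f (Finset.filter_subset _ _ hf))
          _ = _ := Finset.image_id
      have hp : pureF F w a = F.filter (fun η => a ∈ η ∧ η.erase a ∉ F) := by
        unfold pureF
        rw [himgfil, himgF, Finset.filter_filter]
      rw [hp]
      apply Finset.filter_true_of_mem
      intro η hη
      exact hmins η (Finset.mem_filter.1 hη).1
    have hFcard0 : (0:ℝ) < (F.card : ℝ) := by rw [← hGF2]; exact hN0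
    have hpairF : (2:ℝ) * ∑ f ∈ F, (f.card : ℝ)
        = (Fintype.card α : ℝ) * (F.card : ℝ)
          + ∑ a : α, ((F.filter (fun η => a ∈ η ∧ η.erase a ∉ F)).card : ℝ) := by
      exact_mod_cast pairing F (fun η hη x _ => hupc η hη x)
    rw [hGF2, hUF]
    have hsumA : ∑ a : α, ((upFilter S (pureF F w a)).card : ℝ)
        = ∑ a : α, ((F.filter (fun η => a ∈ η ∧ η.erase a ∉ F)).card : ℝ) := by
      refine Finset.sum_congr rfl fun a _ => ?_
      rw [hApure a]
    rw [hsumA]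
    have hlog : Real.logb 2 ((F.card : ℝ) / (F.card : ℝ)) = 0 := by
      rw [div_self (ne_of_gt hFcard0), Real.logb_one]
    rw [hlog, mul_zero, sub_zero]
    have hinv : (F.card : ℝ) * (F.card : ℝ)⁻¹ = 1 := mul_inv_cancel₀ (ne_of_gt hFcard0)
    linear_combination (1 / (2 * (F.card : ℝ))) * hpairF + ((Fintype.card α : ℝ) / 2) * hinv
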